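/- Let q be unimodular, and let (F,K_u;P,U,W₁,W₂) and (F',K_u';P',U',W₁',W₂') be two BCL-1 q-data sets, with associated BCL-1 q-model pairs (V₁,V₂) on (H²⊗F) ⊕ K_u and (V₁',V₂') on (H²⊗F') ⊕ K_u'. Then there exists a unitary τ : (H²⊗F) ⊕ K_u → (H²⊗F') ⊕ K_u' with τV_i = V_i'τ for i = 1,2 if and only if there exist unitaries ω : F → F' and ω_u : K_u → K_u' such that ωP = P'ω, ωU = U'ω, ω_uW₁ = W₁'ω_u and ω_uW₂ = W₂'ω_u. -/

import Mathlib

open ContinuousLinearMap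

/-- The model space `(H² ⊗ F) ⊕ K_u`, with `H² ⊗ F` identified with `ℓ²(ℕ, F)`. -/
noncomputable abbrev BCLModelSpace (F Ku : Type*) [NormedAddCommGroup F]
    [InnerProductSpace ℂ F] [NormedAddCommGroup Ku] [InnerProductSpace ℂ Ku] :=
  WithLp 2 ((lp (fun _ : ℕ => F) 2) × Ku)

namespace BCLAux

set_option linter.unusedSectionVars false

variable {E K E' K' : Type*}
  [NormedAddCommGroup E] [InnerProductSpace ℂ E]
  [NormedAddCommGroup K] [InnerProductSpace ℂ K]
  [NormedAddCommGroup E'] [InnerProductSpace ℂ E']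
  [NormedAddCommGroup K'] [InnerProductSpace ℂ K']

noncomputable def mkk (a : lp (fun _ : ℕ => E) 2) (k : K) : BCLModelSpace E K :=
  (WithLp.equiv 2 _).symm (a, k)

@[simp] lemma mkk_fst (a : lp (fun _ : ℕ => E) 2) (k : K) : (mkk a k).fst = a := rfl
@[simp] lemma mkk_snd (a : lp (fun _ : ℕ => E) 2) (k : K) : (mkk a k).snd = k := rfl

lemma pext {x y : BCLModelSpace E K} (h1 : x.fst = y.fst) (h2 : x.snd = y.snd) : x = y :=
  WithLp.ofLp_injective 2 (Prod.ext h1 h2)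

lemma pinner (x y : BCLModelSpace E K) :
    inner ℂ x y = inner ℂ x.fst y.fst + inner ℂ x.snd y.snd := rfl

lemma eqv_fst (x : BCLModelSpace E K) : (WithLp.equiv 2 _ x).1 = x.fst := rfl

lemma eqv_snd (x : BCLModelSpace E K) : (WithLp.equiv 2 _ x).2 = x.snd := rfl

lemma mkk_self (x : BCLModelSpace E K) : mkk x.fst x.snd = x := rfl

lemma mkk_add (a b : lp (fun _ : ℕ => E) 2) (k l : K) :
    mkk (a + b) (k + l) = mkk a k + mkk b l := rfl

lemma mkk_smul (c : ℂ) (a : lp (fun _ : ℕ => E) 2) (k : K) :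
    mkk (c • a) (c • k) = c • mkk a k := rfl

@[simp] lemma norm_mkk_right (k : K) : ‖(mkk 0 k : BCLModelSpace E K)‖ = ‖k‖ := by
  rw [@norm_eq_sqrt_re_inner ℂ, BCLAux.pinner]
  simp only [mkk_fst, mkk_snd, inner_zero_left, zero_add]
  rw [@norm_eq_sqrt_re_inner ℂ K]

@[simp] lemma norm_mkk_left (a : lp (fun _ : ℕ => E) 2) :
    ‖(mkk a 0 : BCLModelSpace E K)‖ = ‖a‖ := by
  rw [@norm_eq_sqrt_re_inner ℂ, BCLAux.pinner]
  simp only [mkk_fst, mkk_snd, inner_zero_left, add_zero]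
  rw [@norm_eq_sqrt_re_inner ℂ (lp (fun _ : ℕ => E) 2)]

noncomputable def sing (n : ℕ) (f : E) : lp (fun _ : ℕ => E) 2 := lp.single 2 n f

@[simp] lemma sing_apply_self (n : ℕ) (f : E) : (sing n f) n = f :=
  lp.single_apply_self _ _ _

lemma sing_apply_ne (n : ℕ) (f : E) {j : ℕ} (h : j ≠ n) : (sing n f) j = 0 :=
  lp.single_apply_ne _ _ _ h

lemma sing_add (n : ℕ) (f g : E) : sing n (f + g) = sing n f + sing n g := by
  apply lp.ext; funext j
  rcases eq_or_ne j n with rfl | h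
  · simp [lp.coeFn_add]
  · simp [lp.coeFn_add, sing_apply_ne _ _ h]

lemma sing_smul (n : ℕ) (c : ℂ) (f : E) : sing n (c • f) = c • sing n f :=
  lp.single_smul 2 n (E := fun _ : ℕ => E) c f

@[simp] lemma norm_sing (n : ℕ) (f : E) : ‖sing n f‖ = ‖f‖ :=
  lp.norm_single (E := fun _ : ℕ => E) (by norm_num) n f

lemma inner_sing_left (n : ℕ) (f : E) (x : lp (fun _ : ℕ => E) 2) :
    inner ℂ (sing n f) x = inner ℂ f (x n) :=
  lp.inner_single_left _ _ _

lemma inner_sing_right (n : ℕ) (f : E) (x : lp (fun _ : ℕ => E) 2) :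
    inner ℂ x (sing n f) = inner ℂ (x n) f :=
  lp.inner_single_right _ _ _

/-- build a `LinearIsometryEquiv` from raw data -/
noncomputable def buildIso (f : E → E') (g : E' → E)
    (hadd : ∀ a b, f (a + b) = f a + f b) (hsmul : ∀ (c : ℂ) a, f (c • a) = c • f a)
    (hgf : ∀ a, g (f a) = a) (hfg : ∀ b, f (g b) = b)
    (hnorm : ∀ a, ‖f a‖ = ‖a‖) : E ≃ₗᵢ[ℂ] E' :=
  { toLinearEquiv :=
    { toFun := f, map_add' := hadd, map_smul' := hsmul,
      invFun := g, left_inv := hgf, right_inv := hfg }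
    norm_map' := hnorm }

@[simp] lemma buildIso_apply (f : E → E') (g : E' → E) (hadd) (hsmul) (hgf) (hfg) (hnorm)
    (a : E) : buildIso f g hadd hsmul hgf hfg hnorm a = f a := rfl

noncomputable def fmap (ω : E ≃ₗᵢ[ℂ] E') (x : lp (fun _ : ℕ => E) 2) :
    lp (fun _ : ℕ => E') 2 :=
  ⟨fun n => ω (x n), memℓp_gen (by simpa using (lp.memℓp x).summable (p := 2) (by norm_num))⟩

@[simp] lemma fmap_apply (ω : E ≃ₗᵢ[ℂ] E') (x : lp (fun _ : ℕ => E) 2) (n : ℕ) :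
    (fmap ω x) n = ω (x n) := rfl

lemma inner_fmap_fmap (ω : E ≃ₗᵢ[ℂ] E') (x y : lp (fun _ : ℕ => E) 2) :
    inner ℂ (fmap ω x) (fmap ω y) = inner ℂ x y := by
  rw [lp.inner_eq_tsum, lp.inner_eq_tsum]
  congr 1; funext n; exact ω.inner_map_map _ _

lemma norm_mkk (a : lp (fun _ : ℕ => E) 2) (k : K) :
    ‖(mkk a k : BCLModelSpace E K)‖ = Real.sqrt ((inner ℂ a a).re + (inner ℂ k k).re) := by
  rw [@norm_eq_sqrt_re_inner ℂ, BCLAux.pinner, mkk_fst, mkk_snd, map_add]; rfl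

noncomputable def tau (ω : E ≃ₗᵢ[ℂ] E') (ωu : K ≃ₗᵢ[ℂ] K') :
    BCLModelSpace E K ≃ₗᵢ[ℂ] BCLModelSpace E' K' :=
  { toLinearEquiv :=
    { toFun := fun x => mkk (fmap ω x.fst) (ωu x.snd)
      invFun := fun x => mkk (fmap ω.symm x.fst) (ωu.symm x.snd)
      left_inv := fun x => pext (by apply lp.ext; funext n; exact ω.symm_apply_apply _)
        (ωu.symm_apply_apply _)
      right_inv := fun x => pext (by apply lp.ext; funext n; exact ω.apply_symm_apply _)
        (ωu.apply_symm_apply _)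
      map_add' := fun x y => pext
        (by apply lp.ext; funext n
            show ω ((x.fst + y.fst) n) = ((fmap ω x.fst) + (fmap ω y.fst)) n
            rw [lp.coeFn_add, lp.coeFn_add]
            exact ω.map_add _ _)
        (ωu.map_add _ _)
      map_smul' := fun c x => pext
        (by apply lp.ext; funext n
            show ω ((c • x.fst) n) = (c • (fmap ω x.fst)) n
            rw [lp.coeFn_smul, lp.coeFn_smul]
            exact ω.map_smul _ _)
        (ωu.map_smul _ _) }
    norm_map' := fun x => by
      show ‖(mkk (fmap ω x.fst) (ωu x.snd) : BCLModelSpace E' K')‖ = ‖x‖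
      rw [norm_mkk, inner_fmap_fmap, ωu.inner_map_map,
        @norm_eq_sqrt_re_inner ℂ (BCLModelSpace E K) _ _ _ x, BCLAux.pinner, map_add]; rfl }

@[simp] lemma tau_fst_apply (ω : E ≃ₗᵢ[ℂ] E') (ωu : K ≃ₗᵢ[ℂ] K')
    (x : BCLModelSpace E K) (n : ℕ) : ((tau ω ωu x).fst) n = ω ((x.fst) n) := rfl

@[simp] lemma tau_snd (ω : E ≃ₗᵢ[ℂ] E') (ωu : K ≃ₗᵢ[ℂ] K')
    (x : BCLModelSpace E K) : (tau ω ωu x).snd = ωu (x.snd) := rfl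

end BCLAux


set_option maxHeartbeats 4000000 in
theorem stmt_6 (q : ℂ) (hq : ‖q‖ = 1)
    {F Ku F' Ku' : Type*}
    [NormedAddCommGroup F] [InnerProductSpace ℂ F] [CompleteSpace F]
    [NormedAddCommGroup Ku] [InnerProductSpace ℂ Ku] [CompleteSpace Ku]
    [NormedAddCommGroup F'] [InnerProductSpace ℂ F'] [CompleteSpace F']
    [NormedAddCommGroup Ku'] [InnerProductSpace ℂ Ku'] [CompleteSpace Ku']
    (P U : F →L[ℂ] F) (P' U' : F' →L[ℂ] F')
    (hP_idem : P ∘L P = P) (hP_sa : IsSelfAdjoint P)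
    (hP'_idem : P' ∘L P' = P') (hP'_sa : IsSelfAdjoint P')
    (hU₁ : adjoint U ∘L U = 1) (hU₂ : U ∘L adjoint U = 1)
    (hU'₁ : adjoint U' ∘L U' = 1) (hU'₂ : U' ∘L adjoint U' = 1)
    (W₁ W₂ : Ku →L[ℂ] Ku) (W₁' W₂' : Ku' →L[ℂ] Ku')
    (hW₁₁ : adjoint W₁ ∘L W₁ = 1) (hW₁₂ : W₁ ∘L adjoint W₁ = 1)
    (hW₂₁ : adjoint W₂ ∘L W₂ = 1) (hW₂₂ : W₂ ∘L adjoint W₂ = 1)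
    (hW'₁₁ : adjoint W₁' ∘L W₁' = 1) (hW'₁₂ : W₁' ∘L adjoint W₁' = 1)
    (hW'₂₁ : adjoint W₂' ∘L W₂' = 1) (hW'₂₂ : W₂' ∘L adjoint W₂' = 1)
    (hW : W₁ ∘L W₂ = q • (W₂ ∘L W₁)) (hW' : W₁' ∘L W₂' = q • (W₂' ∘L W₁'))
    (V₁ V₂ : BCLModelSpace F Ku →L[ℂ] BCLModelSpace F Ku)
    (V₁' V₂' : BCLModelSpace F' Ku' →L[ℂ] BCLModelSpace F' Ku')
    -- V₁ = (R_q ⊗ P^⊥U + M_z R_q ⊗ PU) ⊕ W₁ and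
    -- V₂ = (R_q̄ ⊗ U*P + R_q̄ M_z ⊗ U*P^⊥) ⊕ W₂, described coordinatewise:
    (hV₁u : ∀ x, (WithLp.equiv 2 _ (V₁ x)).2 = W₁ ((WithLp.equiv 2 _ x).2))
    (hV₁0 : ∀ x, ((WithLp.equiv 2 _ (V₁ x)).1 : ∀ _ : ℕ, F) 0
      = (1 - P) (U (((WithLp.equiv 2 _ x).1 : ∀ _ : ℕ, F) 0)))
    (hV₁n : ∀ x, ∀ n : ℕ, ((WithLp.equiv 2 _ (V₁ x)).1 : ∀ _ : ℕ, F) (n + 1)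
      = q ^ (n + 1) • (1 - P) (U (((WithLp.equiv 2 _ x).1 : ∀ _ : ℕ, F) (n + 1)))
        + q ^ n • P (U (((WithLp.equiv 2 _ x).1 : ∀ _ : ℕ, F) n)))
    (hV₂u : ∀ x, (WithLp.equiv 2 _ (V₂ x)).2 = W₂ ((WithLp.equiv 2 _ x).2))
    (hV₂0 : ∀ x, ((WithLp.equiv 2 _ (V₂ x)).1 : ∀ _ : ℕ, F) 0
      = adjoint U (P (((WithLp.equiv 2 _ x).1 : ∀ _ : ℕ, F) 0)))
    (hV₂n : ∀ x, ∀ n : ℕ, ((WithLp.equiv 2 _ (V₂ x)).1 : ∀ _ : ℕ, F) (n + 1)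
      = (starRingEnd ℂ q) ^ (n + 1) •
          (adjoint U (P (((WithLp.equiv 2 _ x).1 : ∀ _ : ℕ, F) (n + 1)))
            + adjoint U ((1 - P) (((WithLp.equiv 2 _ x).1 : ∀ _ : ℕ, F) n))))
    -- and likewise for the primed data:
    (hV₁'u : ∀ x, (WithLp.equiv 2 _ (V₁' x)).2 = W₁' ((WithLp.equiv 2 _ x).2))
    (hV₁'0 : ∀ x, ((WithLp.equiv 2 _ (V₁' x)).1 : ∀ _ : ℕ, F') 0
      = (1 - P') (U' (((WithLp.equiv 2 _ x).1 : ∀ _ : ℕ, F') 0)))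
    (hV₁'n : ∀ x, ∀ n : ℕ, ((WithLp.equiv 2 _ (V₁' x)).1 : ∀ _ : ℕ, F') (n + 1)
      = q ^ (n + 1) • (1 - P') (U' (((WithLp.equiv 2 _ x).1 : ∀ _ : ℕ, F') (n + 1)))
        + q ^ n • P' (U' (((WithLp.equiv 2 _ x).1 : ∀ _ : ℕ, F') n)))
    (hV₂'u : ∀ x, (WithLp.equiv 2 _ (V₂' x)).2 = W₂' ((WithLp.equiv 2 _ x).2))
    (hV₂'0 : ∀ x, ((WithLp.equiv 2 _ (V₂' x)).1 : ∀ _ : ℕ, F') 0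
      = adjoint U' (P' (((WithLp.equiv 2 _ x).1 : ∀ _ : ℕ, F') 0)))
    (hV₂'n : ∀ x, ∀ n : ℕ, ((WithLp.equiv 2 _ (V₂' x)).1 : ∀ _ : ℕ, F') (n + 1)
      = (starRingEnd ℂ q) ^ (n + 1) •
          (adjoint U' (P' (((WithLp.equiv 2 _ x).1 : ∀ _ : ℕ, F') (n + 1)))
            + adjoint U' ((1 - P') (((WithLp.equiv 2 _ x).1 : ∀ _ : ℕ, F') n)))) :
    -- the two model pairs are jointly unitarily equivalent iff
    -- the data sets coincide up to unitaries ω, ω_u :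
    (∃ τ : BCLModelSpace F Ku ≃ₗᵢ[ℂ] BCLModelSpace F' Ku',
        (∀ x, τ (V₁ x) = V₁' (τ x)) ∧ (∀ x, τ (V₂ x) = V₂' (τ x))) ↔
      (∃ (ω : F ≃ₗᵢ[ℂ] F') (ωu : Ku ≃ₗᵢ[ℂ] Ku'),
        (∀ x, ω (P x) = P' (ω x)) ∧ (∀ x, ω (U x) = U' (ω x)) ∧
        (∀ k, ωu (W₁ k) = W₁' (ωu k)) ∧ (∀ k, ωu (W₂ k) = W₂' (ωu k))) := by
  classical
  simp only [BCLAux.eqv_fst,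
    BCLAux.eqv_snd] at hV₁u hV₁0 hV₁n hV₂u hV₂0 hV₂n hV₁'u hV₁'0 hV₁'n hV₂'u hV₂'0 hV₂'n
  have hq2 : q * (starRingEnd ℂ q) = 1 := by
    rw [Complex.mul_conj, Complex.normSq_eq_norm_sq, hq]; norm_num
  have hqpow : ∀ m : ℕ, q ^ m * (starRingEnd ℂ q) ^ m = 1 := fun m => by
    rw [← mul_pow, hq2, one_pow]
  have hUU : ∀ y, U (adjoint U y) = y := fun y => by
    simpa using DFunLike.congr_fun hU₂ y
  have hUaU : ∀ y, adjoint U (U y) = y := fun y => by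
    simpa using DFunLike.congr_fun hU₁ y
  have hU'U' : ∀ y, U' (adjoint U' y) = y := fun y => by
    simpa using DFunLike.congr_fun hU'₂ y
  have hU'aU' : ∀ y, adjoint U' (U' y) = y := fun y => by
    simpa using DFunLike.congr_fun hU'₁ y
  have hPP : ∀ y, P (P y) = P y := fun y => by
    simpa using DFunLike.congr_fun hP_idem y
  have hP'P' : ∀ y, P' (P' y) = P' y := fun y => by
    simpa using DFunLike.congr_fun hP'_idem y
  have hW₁s : ∀ k, W₁ (adjoint W₁ k) = k := fun k => by
    simpa using DFunLike.congr_fun hW₁₂ k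
  have hW₂s : ∀ k, W₂ (adjoint W₂ k) = k := fun k => by
    simpa using DFunLike.congr_fun hW₂₂ k
  have hW₁s' : ∀ k, W₁' (adjoint W₁' k) = k := fun k => by
    simpa using DFunLike.congr_fun hW'₁₂ k
  have hW₂s' : ∀ k, W₂' (adjoint W₂' k) = k := fun k => by
    simpa using DFunLike.congr_fun hW'₂₂ k
  have lemB : ∀ y z : F, (1 - P) (P y + (1 - P) z) = (1 - P) z := fun y z => by
    simp only [ContinuousLinearMap.sub_apply, ContinuousLinearMap.one_apply, map_add,
      map_sub, hPP]
    abel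
  have lemC : ∀ y z : F, P (P y + (1 - P) z) = P y := fun y z => by
    simp only [ContinuousLinearMap.sub_apply, ContinuousLinearMap.one_apply, map_add,
      map_sub, hPP]
    abel
  have lemD : ∀ y : F, (1 - P) y + P y = y := fun y => by
    simp [ContinuousLinearMap.sub_apply, ContinuousLinearMap.one_apply]
  have lemB' : ∀ y z : F', (1 - P') (P' y + (1 - P') z) = (1 - P') z := fun y z => by
    simp only [ContinuousLinearMap.sub_apply, ContinuousLinearMap.one_apply, map_add,
      map_sub, hP'P']
    abel
  have lemC' : ∀ y z : F', P' (P' y + (1 - P') z) = P' y := fun y z => by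
    simp only [ContinuousLinearMap.sub_apply, ContinuousLinearMap.one_apply, map_add,
      map_sub, hP'P']
    abel
  have lemD' : ∀ y : F', (1 - P') y + P' y = y := fun y => by
    simp [ContinuousLinearMap.sub_apply, ContinuousLinearMap.one_apply]
  -- the product `T = V₁ V₂` is the shift ⊕ `W₁W₂`:
  have hT2 : ∀ x : BCLModelSpace F Ku, (V₁ (V₂ x)).snd = W₁ (W₂ x.snd) := fun x => by
    rw [hV₁u, hV₂u]
  have hT0 : ∀ x : BCLModelSpace F Ku, ((V₁ (V₂ x)).fst : ∀ _ : ℕ, F) 0 = 0 := fun x => by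
    rw [hV₁0, hV₂0, hUU]
    simp [ContinuousLinearMap.sub_apply, ContinuousLinearMap.one_apply, hPP]
  have hTn : ∀ (x : BCLModelSpace F Ku) (n : ℕ),
      ((V₁ (V₂ x)).fst : ∀ _ : ℕ, F) (n + 1) = (x.fst : ∀ _ : ℕ, F) n := by
    intro x n
    rw [hV₁n, hV₂n]
    cases n with
    | zero =>
      rw [hV₂0]
      simp only [map_smul, map_add, hUU, hPP, lemB, lemC, lemD, smul_smul, hqpow,
        pow_zero, one_smul]
    | succ m =>
      rw [hV₂n]
      simp only [map_smul, map_add, hUU, hPP, lemB, lemC, lemD, smul_smul, hqpow,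
        pow_zero, one_smul]
  have hT'2 : ∀ x : BCLModelSpace F' Ku', (V₁' (V₂' x)).snd = W₁' (W₂' x.snd) := fun x => by
    rw [hV₁'u, hV₂'u]
  have hT'0 : ∀ x : BCLModelSpace F' Ku', ((V₁' (V₂' x)).fst : ∀ _ : ℕ, F') 0 = 0 := fun x => by
    rw [hV₁'0, hV₂'0, hU'U']
    simp [ContinuousLinearMap.sub_apply, ContinuousLinearMap.one_apply, hP'P']
  have hT'n : ∀ (x : BCLModelSpace F' Ku') (n : ℕ),
      ((V₁' (V₂' x)).fst : ∀ _ : ℕ, F') (n + 1) = (x.fst : ∀ _ : ℕ, F') n := by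
    intro x n
    rw [hV₁'n, hV₂'n]
    cases n with
    | zero =>
      rw [hV₂'0]
      simp only [map_smul, map_add, hU'U', hP'P', lemB', lemC', lemD', smul_smul, hqpow,
        pow_zero, one_smul]
    | succ m =>
      rw [hV₂'n]
      simp only [map_smul, map_add, hU'U', hP'P', lemB', lemC', lemD', smul_smul, hqpow,
        pow_zero, one_smul]
  constructor
  · rintro ⟨τ, hτ₁, hτ₂⟩
    have hτ₁' : ∀ x, τ.symm (V₁' x) = V₁ (τ.symm x) := by
      intro x
      have h := hτ₁ (τ.symm x)
      rw [τ.apply_symm_apply] at h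
      rw [← h, τ.symm_apply_apply]
    have hτ₂' : ∀ x, τ.symm (V₂' x) = V₂ (τ.symm x) := by
      intro x
      have h := hτ₂ (τ.symm x)
      rw [τ.apply_symm_apply] at h
      rw [← h, τ.symm_apply_apply]
    have hTτ : ∀ x, τ (V₁ (V₂ x)) = V₁' (V₂' (τ x)) := fun x => by rw [hτ₁, hτ₂]
    have hTτ' : ∀ x, τ.symm (V₁' (V₂' x)) = V₁ (V₂ (τ.symm x)) := fun x => by
      rw [hτ₁', hτ₂']
    have hcommit : ∀ (n : ℕ) (x), τ ((fun y => V₁ (V₂ y))^[n] x)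
        = (fun y => V₁' (V₂' y))^[n] (τ x) := by
      intro n
      induction n with
      | zero => intro x; rfl
      | succ m ih =>
        intro x
        simp only [Function.iterate_succ_apply']
        rw [hTτ, ih]
    have hcommit' : ∀ (n : ℕ) (x), τ.symm ((fun y => V₁' (V₂' y))^[n] x)
        = (fun y => V₁ (V₂ y))^[n] (τ.symm x) := by
      intro n
      induction n with
      | zero => intro x; rfl
      | succ m ih =>
        intro x
        simp only [Function.iterate_succ_apply']
        rw [hTτ', ih]
    have hiter : ∀ (m : ℕ) (z : BCLModelSpace F Ku) (j : ℕ), j < m →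
        (((fun y => V₁ (V₂ y))^[m] z).fst : ∀ _ : ℕ, F) j = 0 := by
      intro m
      induction m with
      | zero => intro z j h; exact absurd h (Nat.not_lt_zero j)
      | succ m ih =>
        intro z j hj
        simp only [Function.iterate_succ_apply']
        cases j with
        | zero => exact hT0 _
        | succ i => rw [hTn]; exact ih z i (by omega)
    have hiter' : ∀ (m : ℕ) (z : BCLModelSpace F' Ku') (j : ℕ), j < m →
        (((fun y => V₁' (V₂' y))^[m] z).fst : ∀ _ : ℕ, F') j = 0 := by
      intro m
      induction m with
      | zero => intro z j h; exact absurd h (Nat.not_lt_zero j)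
      | succ m ih =>
        intro z j hj
        simp only [Function.iterate_succ_apply']
        cases j with
        | zero => exact hT'0 _
        | succ i => rw [hT'n]; exact ih z i (by omega)
    have hrange : ∀ (k : Ku) (n : ℕ), ∃ z, (fun y => V₁ (V₂ y))^[n] z = BCLAux.mkk 0 k := by
      intro k n
      induction n generalizing k with
      | zero => exact ⟨BCLAux.mkk 0 k, rfl⟩
      | succ m ih =>
        obtain ⟨z, hz⟩ := ih (adjoint W₂ (adjoint W₁ k))
        refine ⟨z, ?_⟩
        simp only [Function.iterate_succ_apply', hz]
        refine BCLAux.pext ?_ ?_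
        · apply lp.ext; funext j
          cases j with
          | zero => rw [hT0, BCLAux.mkk_fst]; simp only [lp.coeFn_zero, Pi.zero_apply]
          | succ i =>
            rw [hTn]
            simp only [BCLAux.mkk_fst, lp.coeFn_zero, Pi.zero_apply]
        · rw [hT2]
          simp only [BCLAux.mkk_snd, hW₂s, hW₁s]
    have hrange' : ∀ (k : Ku') (n : ℕ),
        ∃ z, (fun y => V₁' (V₂' y))^[n] z = BCLAux.mkk 0 k := by
      intro k n
      induction n generalizing k with
      | zero => exact ⟨BCLAux.mkk 0 k, rfl⟩
      | succ m ih =>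
        obtain ⟨z, hz⟩ := ih (adjoint W₂' (adjoint W₁' k))
        refine ⟨z, ?_⟩
        simp only [Function.iterate_succ_apply', hz]
        refine BCLAux.pext ?_ ?_
        · apply lp.ext; funext j
          cases j with
          | zero => rw [hT'0, BCLAux.mkk_fst]; simp only [lp.coeFn_zero, Pi.zero_apply]
          | succ i =>
            rw [hT'n]
            simp only [BCLAux.mkk_fst, lp.coeFn_zero, Pi.zero_apply]
        · rw [hT'2]
          simp only [BCLAux.mkk_snd, hW₂s', hW₁s']
    have hker : ∀ x : BCLModelSpace F Ku, x.fst = 0 → (τ x).fst = 0 := by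
      intro x hx
      have hx' : x = BCLAux.mkk 0 x.snd := BCLAux.pext (by rw [BCLAux.mkk_fst]; exact hx) rfl
      apply lp.ext; funext j
      obtain ⟨z, hz⟩ := hrange x.snd (j + 1)
      have hxz : τ x = (fun y => V₁' (V₂' y))^[j + 1] (τ z) := by
        rw [hx', ← hz, hcommit]
      have h0 : ((τ x).fst : ∀ _ : ℕ, F') j = 0 := by
        rw [hxz]; exact hiter' (j + 1) (τ z) j (Nat.lt_succ_self j)
      simp only [lp.coeFn_zero, Pi.zero_apply]
      exact h0
    have hker' : ∀ x : BCLModelSpace F' Ku', x.fst = 0 → (τ.symm x).fst = 0 := by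
      intro x hx
      have hx' : x = BCLAux.mkk 0 x.snd := BCLAux.pext (by rw [BCLAux.mkk_fst]; exact hx) rfl
      apply lp.ext; funext j
      obtain ⟨z, hz⟩ := hrange' x.snd (j + 1)
      have hxz : τ.symm x = (fun y => V₁ (V₂ y))^[j + 1] (τ.symm z) := by
        rw [hx', ← hz, hcommit']
      have h0 : ((τ.symm x).fst : ∀ _ : ℕ, F) j = 0 := by
        rw [hxz]; exact hiter (j + 1) (τ.symm z) j (Nat.lt_succ_self j)
      simp only [lp.coeFn_zero, Pi.zero_apply]
      exact h0
    have hsnd : ∀ x : BCLModelSpace F Ku, x.snd = 0 → (τ x).snd = 0 := by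
      intro x hx
      apply ext_inner_left ℂ
      intro v
      rw [inner_zero_right]
      have h1 : inner ℂ (BCLAux.mkk (0 : lp (fun _ : ℕ => F') 2) v) (τ x)
          = inner ℂ v ((τ x).snd) := by
        rw [BCLAux.pinner, BCLAux.mkk_fst, BCLAux.mkk_snd, inner_zero_left,
          zero_add]
      have h2 : inner ℂ (BCLAux.mkk (0 : lp (fun _ : ℕ => F') 2) v) (τ x)
          = inner ℂ (τ.symm (BCLAux.mkk (0 : lp (fun _ : ℕ => F') 2) v)) x := by
        conv_lhs => rw [← τ.apply_symm_apply (BCLAux.mkk (0 : lp (fun _ : ℕ => F') 2) v)]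
        exact τ.inner_map_map _ _
      rw [← h1, h2, BCLAux.pinner,
        hker' (BCLAux.mkk (0 : lp (fun _ : ℕ => F') 2) v) (BCLAux.mkk_fst _ _), hx]
      simp only [inner_zero_left, inner_zero_right, add_zero]
    have hsnd' : ∀ x : BCLModelSpace F' Ku', x.snd = 0 → (τ.symm x).snd = 0 := by
      intro x hx
      apply ext_inner_left ℂ
      intro v
      rw [inner_zero_right]
      have h1 : inner ℂ (BCLAux.mkk (0 : lp (fun _ : ℕ => F) 2) v) (τ.symm x)
          = inner ℂ v ((τ.symm x).snd) := by
        rw [BCLAux.pinner, BCLAux.mkk_fst, BCLAux.mkk_snd, inner_zero_left,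
          zero_add]
      have h2 : inner ℂ (BCLAux.mkk (0 : lp (fun _ : ℕ => F) 2) v) (τ.symm x)
          = inner ℂ (τ (BCLAux.mkk (0 : lp (fun _ : ℕ => F) 2) v)) x := by
        conv_lhs => rw [← τ.symm_apply_apply (BCLAux.mkk (0 : lp (fun _ : ℕ => F) 2) v)]
        exact τ.symm.inner_map_map _ _
      rw [← h1, h2, BCLAux.pinner,
        hker (BCLAux.mkk (0 : lp (fun _ : ℕ => F) 2) v) (BCLAux.mkk_fst _ _), hx]
      simp only [inner_zero_left, inner_zero_right, add_zero]
    -- ### the unitary part ωu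
    have hτ0k : ∀ k : Ku, τ (BCLAux.mkk 0 k)
        = BCLAux.mkk 0 ((τ (BCLAux.mkk (0 : lp (fun _ : ℕ => F) 2) k)).snd) := fun k =>
      BCLAux.pext (by rw [BCLAux.mkk_fst]; exact hker _ (BCLAux.mkk_fst _ _)) rfl
    have hτ0k' : ∀ k : Ku', τ.symm (BCLAux.mkk 0 k)
        = BCLAux.mkk 0 ((τ.symm (BCLAux.mkk (0 : lp (fun _ : ℕ => F') 2) k)).snd) := fun k =>
      BCLAux.pext (by rw [BCLAux.mkk_fst]; exact hker' _ (BCLAux.mkk_fst _ _)) rfl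
    have hmkk_add_k : ∀ k l : Ku,
        (BCLAux.mkk 0 (k + l) : BCLModelSpace F Ku) = BCLAux.mkk 0 k + BCLAux.mkk 0 l :=
      fun k l => by rw [← BCLAux.mkk_add, add_zero]
    have hmkk_smul_k : ∀ (c : ℂ) (k : Ku),
        (BCLAux.mkk 0 (c • k) : BCLModelSpace F Ku) = c • BCLAux.mkk 0 k :=
      fun c k => by rw [← BCLAux.mkk_smul, smul_zero]
    let ωu : Ku ≃ₗᵢ[ℂ] Ku' := BCLAux.buildIso
      (fun k => (τ (BCLAux.mkk 0 k)).snd)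
      (fun k => (τ.symm (BCLAux.mkk 0 k)).snd)
      (fun a b => by
        show (τ (BCLAux.mkk 0 (a + b))).snd
          = (τ (BCLAux.mkk 0 a)).snd + (τ (BCLAux.mkk 0 b)).snd
        rw [hmkk_add_k, map_add]; rfl)
      (fun c a => by
        show (τ (BCLAux.mkk 0 (c • a))).snd = c • (τ (BCLAux.mkk 0 a)).snd
        rw [hmkk_smul_k, map_smul]; rfl)
      (fun a => by
        show (τ.symm (BCLAux.mkk 0 ((τ (BCLAux.mkk 0 a)).snd))).snd = a
        rw [← hτ0k, τ.symm_apply_apply]; rfl)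
      (fun b => by
        show (τ (BCLAux.mkk 0 ((τ.symm (BCLAux.mkk 0 b)).snd))).snd = b
        rw [← hτ0k', τ.apply_symm_apply]; rfl)
      (fun a => by
        show ‖(τ (BCLAux.mkk (0 : lp (fun _ : ℕ => F) 2) a)).snd‖ = ‖a‖
        calc ‖(τ (BCLAux.mkk (0 : lp (fun _ : ℕ => F) 2) a)).snd‖
            = ‖(BCLAux.mkk 0 ((τ (BCLAux.mkk (0 : lp (fun _ : ℕ => F) 2) a)).snd) :
                BCLModelSpace F' Ku')‖ := (BCLAux.norm_mkk_right _).symm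
          _ = ‖τ (BCLAux.mkk (0 : lp (fun _ : ℕ => F) 2) a)‖ := by rw [← hτ0k]
          _ = ‖BCLAux.mkk (0 : lp (fun _ : ℕ => F) 2) a‖ := τ.norm_map _
          _ = ‖a‖ := BCLAux.norm_mkk_right _)
    have hτ0k2 : ∀ k : Ku, τ (BCLAux.mkk 0 k) = BCLAux.mkk 0 (ωu k) := hτ0k
    have hV₁0k : ∀ k : Ku, V₁ (BCLAux.mkk 0 k) = BCLAux.mkk 0 (W₁ k) := by
      intro k
      refine BCLAux.pext ?_ (by rw [hV₁u]; rfl)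
      apply lp.ext; funext j
      cases j with
      | zero =>
        rw [hV₁0]
        simp only [BCLAux.mkk_fst, lp.coeFn_zero, Pi.zero_apply, map_zero]
      | succ i =>
        rw [hV₁n]
        simp only [BCLAux.mkk_fst, lp.coeFn_zero, Pi.zero_apply, map_zero, smul_zero,
          add_zero]
    have hV₂0k : ∀ k : Ku, V₂ (BCLAux.mkk 0 k) = BCLAux.mkk 0 (W₂ k) := by
      intro k
      refine BCLAux.pext ?_ (by rw [hV₂u]; rfl)
      apply lp.ext; funext j
      cases j with
      | zero =>
        rw [hV₂0]
        simp only [BCLAux.mkk_fst, lp.coeFn_zero, Pi.zero_apply, map_zero]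
      | succ i =>
        rw [hV₂n]
        simp only [BCLAux.mkk_fst, lp.coeFn_zero, Pi.zero_apply, map_zero, smul_zero,
          add_zero]
    have hV₁'0k : ∀ k : Ku', V₁' (BCLAux.mkk 0 k) = BCLAux.mkk 0 (W₁' k) := by
      intro k
      refine BCLAux.pext ?_ (by rw [hV₁'u]; rfl)
      apply lp.ext; funext j
      cases j with
      | zero =>
        rw [hV₁'0]
        simp only [BCLAux.mkk_fst, lp.coeFn_zero, Pi.zero_apply, map_zero]
      | succ i =>
        rw [hV₁'n]
        simp only [BCLAux.mkk_fst, lp.coeFn_zero, Pi.zero_apply, map_zero, smul_zero,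
          add_zero]
    have hV₂'0k : ∀ k : Ku', V₂' (BCLAux.mkk 0 k) = BCLAux.mkk 0 (W₂' k) := by
      intro k
      refine BCLAux.pext ?_ (by rw [hV₂'u]; rfl)
      apply lp.ext; funext j
      cases j with
      | zero =>
        rw [hV₂'0]
        simp only [BCLAux.mkk_fst, lp.coeFn_zero, Pi.zero_apply, map_zero]
      | succ i =>
        rw [hV₂'n]
        simp only [BCLAux.mkk_fst, lp.coeFn_zero, Pi.zero_apply, map_zero, smul_zero,
          add_zero]
    have hωuW₁ : ∀ k, ωu (W₁ k) = W₁' (ωu k) := by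
      intro k
      have h := hτ₁ (BCLAux.mkk 0 k)
      rw [hV₁0k, hτ0k2, hτ0k2, hV₁'0k] at h
      exact congrArg WithLp.snd h
    have hωuW₂ : ∀ k, ωu (W₂ k) = W₂' (ωu k) := by
      intro k
      have h := hτ₂ (BCLAux.mkk 0 k)
      rw [hV₂0k, hτ0k2, hτ0k2, hV₂'0k] at h
      exact congrArg WithLp.snd h
    -- ### shift action on elementary tensors
    have hTsingle : ∀ (n : ℕ) (f : F),
        V₁ (V₂ (BCLAux.mkk (BCLAux.sing n f) 0)) = BCLAux.mkk (BCLAux.sing (n + 1) f) 0 := by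
      intro n f
      refine BCLAux.pext ?_ ?_
      · apply lp.ext; funext j
        cases j with
        | zero =>
          rw [hT0, BCLAux.mkk_fst]
          exact (BCLAux.sing_apply_ne (n + 1) f (by omega)).symm
        | succ i =>
          rw [hTn]
          simp only [BCLAux.mkk_fst]
          rcases eq_or_ne i n with rfl | h
          · rw [BCLAux.sing_apply_self, BCLAux.sing_apply_self]
          · rw [BCLAux.sing_apply_ne _ _ h,
              BCLAux.sing_apply_ne _ _ (show i + 1 ≠ n + 1 by omega)]
      · rw [hT2]
        simp only [BCLAux.mkk_snd, map_zero]
    have hTsingle' : ∀ (n : ℕ) (g : F'),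
        V₁' (V₂' (BCLAux.mkk (BCLAux.sing n g) 0))
          = BCLAux.mkk (BCLAux.sing (n + 1) g) 0 := by
      intro n g
      refine BCLAux.pext ?_ ?_
      · apply lp.ext; funext j
        cases j with
        | zero =>
          rw [hT'0, BCLAux.mkk_fst]
          exact (BCLAux.sing_apply_ne (n + 1) g (by omega)).symm
        | succ i =>
          rw [hT'n]
          simp only [BCLAux.mkk_fst]
          rcases eq_or_ne i n with rfl | h
          · rw [BCLAux.sing_apply_self, BCLAux.sing_apply_self]
          · rw [BCLAux.sing_apply_ne _ _ h,
              BCLAux.sing_apply_ne _ _ (show i + 1 ≠ n + 1 by omega)]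
      · rw [hT'2]
        simp only [BCLAux.mkk_snd, map_zero]
    -- ### the image of an elementary tensor at level 0 is at level 0
    have hA : ∀ (f : F) (j : ℕ),
        ((τ (BCLAux.mkk (BCLAux.sing 0 f) 0)).fst : ∀ _ : ℕ, F') (j + 1) = 0 := by
      intro f j
      apply ext_inner_left ℂ
      intro g
      rw [inner_zero_right]
      have h1 : inner ℂ g (((τ (BCLAux.mkk (BCLAux.sing 0 f) 0)).fst : ∀ _ : ℕ, F') (j + 1))
          = inner ℂ (BCLAux.mkk (BCLAux.sing (j + 1) g) (0 : Ku'))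
              (τ (BCLAux.mkk (BCLAux.sing 0 f) 0)) := by
        rw [BCLAux.pinner, BCLAux.mkk_fst, BCLAux.mkk_snd,
          BCLAux.inner_sing_left, inner_zero_left, add_zero]
      rw [h1, ← hTsingle' j g]
      have h2 : V₁' (V₂' (BCLAux.mkk (BCLAux.sing j g) (0 : Ku')))
          = τ (V₁ (V₂ (τ.symm (BCLAux.mkk (BCLAux.sing j g) (0 : Ku'))))) := by
        rw [hTτ, τ.apply_symm_apply]
      rw [h2, τ.inner_map_map, BCLAux.pinner, BCLAux.mkk_fst, BCLAux.mkk_snd,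
        inner_zero_right, add_zero, BCLAux.inner_sing_right, hT0, inner_zero_left]
    have hA' : ∀ (g : F') (j : ℕ),
        ((τ.symm (BCLAux.mkk (BCLAux.sing 0 g) 0)).fst : ∀ _ : ℕ, F) (j + 1) = 0 := by
      intro g j
      apply ext_inner_left ℂ
      intro f
      rw [inner_zero_right]
      have h1 : inner ℂ f (((τ.symm (BCLAux.mkk (BCLAux.sing 0 g) 0)).fst : ∀ _ : ℕ, F) (j + 1))
          = inner ℂ (BCLAux.mkk (BCLAux.sing (j + 1) f) (0 : Ku))
              (τ.symm (BCLAux.mkk (BCLAux.sing 0 g) 0)) := by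
        rw [BCLAux.pinner, BCLAux.mkk_fst, BCLAux.mkk_snd,
          BCLAux.inner_sing_left, inner_zero_left, add_zero]
      rw [h1, ← hTsingle j f]
      have h2 : V₁ (V₂ (BCLAux.mkk (BCLAux.sing j f) (0 : Ku)))
          = τ.symm (V₁' (V₂' (τ (BCLAux.mkk (BCLAux.sing j f) (0 : Ku))))) := by
        rw [hTτ', τ.symm_apply_apply]
      rw [h2, τ.symm.inner_map_map, BCLAux.pinner, BCLAux.mkk_fst, BCLAux.mkk_snd,
        inner_zero_right, add_zero, BCLAux.inner_sing_right, hT'0, inner_zero_left]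
    -- ### diagonal action on elementary tensors
    have hsingle0 : ∀ f : F, τ (BCLAux.mkk (BCLAux.sing 0 f) 0)
        = BCLAux.mkk (BCLAux.sing 0
            (((τ (BCLAux.mkk (BCLAux.sing 0 f) 0)).fst : ∀ _ : ℕ, F') 0)) 0 := by
      intro f
      refine BCLAux.pext ?_ (hsnd _ rfl)
      apply lp.ext; funext j
      cases j with
      | zero => simp only [BCLAux.mkk_fst, BCLAux.sing_apply_self]
      | succ i =>
        simp only [BCLAux.mkk_fst]
        rw [BCLAux.sing_apply_ne _ _ (Nat.succ_ne_zero i)]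
        exact hA f i
    have hsingle0' : ∀ g : F', τ.symm (BCLAux.mkk (BCLAux.sing 0 g) 0)
        = BCLAux.mkk (BCLAux.sing 0
            (((τ.symm (BCLAux.mkk (BCLAux.sing 0 g) 0)).fst : ∀ _ : ℕ, F) 0)) 0 := by
      intro g
      refine BCLAux.pext ?_ (hsnd' _ rfl)
      apply lp.ext; funext j
      cases j with
      | zero => simp only [BCLAux.mkk_fst, BCLAux.sing_apply_self]
      | succ i =>
        simp only [BCLAux.mkk_fst]
        rw [BCLAux.sing_apply_ne _ _ (Nat.succ_ne_zero i)]
        exact hA' g i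
    have hsinglen : ∀ (n : ℕ) (f : F), τ (BCLAux.mkk (BCLAux.sing n f) 0)
        = BCLAux.mkk (BCLAux.sing n
            (((τ (BCLAux.mkk (BCLAux.sing 0 f) 0)).fst : ∀ _ : ℕ, F') 0)) 0 := by
      intro n
      induction n with
      | zero => exact hsingle0
      | succ m ih =>
        intro f
        rw [← hTsingle m f, hTτ, ih, hTsingle' m]
    have hinv1 : ∀ f : F,
        ((τ.symm (BCLAux.mkk (BCLAux.sing 0
            (((τ (BCLAux.mkk (BCLAux.sing 0 f) 0)).fst : ∀ _ : ℕ, F') 0)) 0)).fst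
          : ∀ _ : ℕ, F) 0 = f := by
      intro f
      rw [← hsingle0 f, τ.symm_apply_apply, BCLAux.mkk_fst, BCLAux.sing_apply_self]
    have hinv2 : ∀ g : F',
        ((τ (BCLAux.mkk (BCLAux.sing 0
            (((τ.symm (BCLAux.mkk (BCLAux.sing 0 g) 0)).fst : ∀ _ : ℕ, F) 0)) 0)).fst
          : ∀ _ : ℕ, F') 0 = g := by
      intro g
      rw [← hsingle0' g, τ.apply_symm_apply, BCLAux.mkk_fst, BCLAux.sing_apply_self]
    have hmkk_add_f : ∀ a b : lp (fun _ : ℕ => F) 2,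
        (BCLAux.mkk (a + b) 0 : BCLModelSpace F Ku) = BCLAux.mkk a 0 + BCLAux.mkk b 0 :=
      fun a b => by rw [← BCLAux.mkk_add, add_zero]
    have hmkk_add_f' : ∀ a b : lp (fun _ : ℕ => F') 2,
        (BCLAux.mkk (a + b) 0 : BCLModelSpace F' Ku') = BCLAux.mkk a 0 + BCLAux.mkk b 0 :=
      fun a b => by rw [← BCLAux.mkk_add, add_zero]
    have hmkk_smul_f : ∀ (c : ℂ) (a : lp (fun _ : ℕ => F) 2),
        (BCLAux.mkk (c • a) 0 : BCLModelSpace F Ku) = c • BCLAux.mkk a 0 :=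
      fun c a => by rw [← BCLAux.mkk_smul, smul_zero]
    let ω : F ≃ₗᵢ[ℂ] F' := BCLAux.buildIso
      (fun f => ((τ (BCLAux.mkk (BCLAux.sing 0 f) 0)).fst : ∀ _ : ℕ, F') 0)
      (fun g => ((τ.symm (BCLAux.mkk (BCLAux.sing 0 g) 0)).fst : ∀ _ : ℕ, F) 0)
      (fun a b => by
        show ((τ (BCLAux.mkk (BCLAux.sing 0 (a + b)) 0)).fst : ∀ _ : ℕ, F') 0
          = ((τ (BCLAux.mkk (BCLAux.sing 0 a) 0)).fst : ∀ _ : ℕ, F') 0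
            + ((τ (BCLAux.mkk (BCLAux.sing 0 b) 0)).fst : ∀ _ : ℕ, F') 0
        rw [BCLAux.sing_add, hmkk_add_f, map_add]
        simp only [WithLp.add_fst, lp.coeFn_add, Pi.add_apply])
      (fun c a => by
        show ((τ (BCLAux.mkk (BCLAux.sing 0 (c • a)) 0)).fst : ∀ _ : ℕ, F') 0
          = c • ((τ (BCLAux.mkk (BCLAux.sing 0 a) 0)).fst : ∀ _ : ℕ, F') 0
        rw [BCLAux.sing_smul, hmkk_smul_f, map_smul]
        simp only [WithLp.smul_fst, lp.coeFn_smul, Pi.smul_apply])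
      hinv1
      hinv2
      (fun a => by
        show ‖((τ (BCLAux.mkk (BCLAux.sing 0 a) 0)).fst : ∀ _ : ℕ, F') 0‖ = ‖a‖
        calc ‖((τ (BCLAux.mkk (BCLAux.sing 0 a) 0)).fst : ∀ _ : ℕ, F') 0‖
            = ‖BCLAux.sing 0 (((τ (BCLAux.mkk (BCLAux.sing 0 a) 0)).fst : ∀ _ : ℕ, F') 0)‖ :=
              (BCLAux.norm_sing _ _).symm
          _ = ‖(BCLAux.mkk (BCLAux.sing 0
                (((τ (BCLAux.mkk (BCLAux.sing 0 a) 0)).fst : ∀ _ : ℕ, F') 0)) 0 :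
                BCLModelSpace F' Ku')‖ := (BCLAux.norm_mkk_left _).symm
          _ = ‖τ (BCLAux.mkk (BCLAux.sing 0 a) 0)‖ := by rw [← hsingle0]
          _ = ‖(BCLAux.mkk (BCLAux.sing 0 a) 0 : BCLModelSpace F Ku)‖ := τ.norm_map _
          _ = ‖BCLAux.sing 0 a‖ := BCLAux.norm_mkk_left _
          _ = ‖a‖ := BCLAux.norm_sing _ _)
    have hτsing : ∀ (n : ℕ) (f : F),
        τ (BCLAux.mkk (BCLAux.sing n f) 0) = BCLAux.mkk (BCLAux.sing n (ω f)) 0 := hsinglen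
    -- ### action of V₁ on elementary tensors
    have hV₁e : ∀ f : F, V₁ (BCLAux.mkk (BCLAux.sing 0 f) 0)
        = BCLAux.mkk (BCLAux.sing 0 ((1 - P) (U f)) + BCLAux.sing 1 (P (U f))) 0 := by
      intro f
      refine BCLAux.pext ?_ (by rw [hV₁u]; simp only [BCLAux.mkk_snd, map_zero])
      apply lp.ext; funext j
      cases j with
      | zero =>
        rw [hV₁0]
        simp only [BCLAux.mkk_fst, lp.coeFn_add, Pi.add_apply]
        rw [BCLAux.sing_apply_self, BCLAux.sing_apply_self,
          BCLAux.sing_apply_ne _ _ (show (0 : ℕ) ≠ 1 by omega), add_zero]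
      | succ i =>
        cases i with
        | zero =>
          rw [hV₁n]
          simp only [BCLAux.mkk_fst, lp.coeFn_add, Pi.add_apply, pow_zero, pow_one,
            one_smul]
          rw [BCLAux.sing_apply_ne _ _ (show (0 : ℕ) + 1 ≠ 0 by omega),
            BCLAux.sing_apply_self, BCLAux.sing_apply_ne _ _ (show (0 : ℕ) + 1 ≠ 0 by omega),
            BCLAux.sing_apply_self]
          simp only [map_zero, smul_zero, zero_add]
        | succ i2 =>
          rw [hV₁n]
          simp only [BCLAux.mkk_fst, lp.coeFn_add, Pi.add_apply]
          rw [BCLAux.sing_apply_ne _ _ (show i2 + 1 + 1 ≠ 0 by omega),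
            BCLAux.sing_apply_ne _ _ (show i2 + 1 ≠ 0 by omega),
            BCLAux.sing_apply_ne _ _ (show i2 + 1 + 1 ≠ 0 by omega),
            BCLAux.sing_apply_ne _ _ (show i2 + 1 + 1 ≠ 1 by omega)]
          simp only [map_zero, smul_zero, add_zero]
    have hV₁'e : ∀ g : F', V₁' (BCLAux.mkk (BCLAux.sing 0 g) 0)
        = BCLAux.mkk (BCLAux.sing 0 ((1 - P') (U' g)) + BCLAux.sing 1 (P' (U' g))) 0 := by
      intro g
      refine BCLAux.pext ?_ (by rw [hV₁'u]; simp only [BCLAux.mkk_snd, map_zero])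
      apply lp.ext; funext j
      cases j with
      | zero =>
        rw [hV₁'0]
        simp only [BCLAux.mkk_fst, lp.coeFn_add, Pi.add_apply]
        rw [BCLAux.sing_apply_self, BCLAux.sing_apply_self,
          BCLAux.sing_apply_ne _ _ (show (0 : ℕ) ≠ 1 by omega), add_zero]
      | succ i =>
        cases i with
        | zero =>
          rw [hV₁'n]
          simp only [BCLAux.mkk_fst, lp.coeFn_add, Pi.add_apply, pow_zero, pow_one,
            one_smul]
          rw [BCLAux.sing_apply_ne _ _ (show (0 : ℕ) + 1 ≠ 0 by omega),
            BCLAux.sing_apply_self, BCLAux.sing_apply_ne _ _ (show (0 : ℕ) + 1 ≠ 0 by omega),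
            BCLAux.sing_apply_self]
          simp only [map_zero, smul_zero, zero_add]
        | succ i2 =>
          rw [hV₁'n]
          simp only [BCLAux.mkk_fst, lp.coeFn_add, Pi.add_apply]
          rw [BCLAux.sing_apply_ne _ _ (show i2 + 1 + 1 ≠ 0 by omega),
            BCLAux.sing_apply_ne _ _ (show i2 + 1 ≠ 0 by omega),
            BCLAux.sing_apply_ne _ _ (show i2 + 1 + 1 ≠ 0 by omega),
            BCLAux.sing_apply_ne _ _ (show i2 + 1 + 1 ≠ 1 by omega)]
          simp only [map_zero, smul_zero, add_zero]
    have hkey : ∀ f : F,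
        BCLAux.mkk (BCLAux.sing 0 (ω ((1 - P) (U f))) + BCLAux.sing 1 (ω (P (U f)))) (0 : Ku')
          = BCLAux.mkk (BCLAux.sing 0 ((1 - P') (U' (ω f)))
              + BCLAux.sing 1 (P' (U' (ω f)))) 0 := by
      intro f
      have h := hτ₁ (BCLAux.mkk (BCLAux.sing 0 f) 0)
      rw [hV₁e, hτsing, hV₁'e, hmkk_add_f, map_add, hτsing 0, hτsing 1,
        ← hmkk_add_f'] at h
      exact h
    have ha : ∀ f : F, ω ((1 - P) (U f)) = (1 - P') (U' (ω f)) := by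
      intro f
      have h := congrArg (fun z : BCLModelSpace F' Ku' => (z.fst : ∀ _ : ℕ, F') 0) (hkey f)
      simp only [BCLAux.mkk_fst, lp.coeFn_add, Pi.add_apply, BCLAux.sing_apply_self] at h
      rw [BCLAux.sing_apply_ne _ _ (show (0 : ℕ) ≠ 1 by omega),
        BCLAux.sing_apply_ne _ _ (show (0 : ℕ) ≠ 1 by omega), add_zero, add_zero] at h
      exact h
    have hb : ∀ f : F, ω (P (U f)) = P' (U' (ω f)) := by
      intro f
      have h := congrArg (fun z : BCLModelSpace F' Ku' => (z.fst : ∀ _ : ℕ, F') 1) (hkey f)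
      simp only [BCLAux.mkk_fst, lp.coeFn_add, Pi.add_apply, BCLAux.sing_apply_self] at h
      rw [BCLAux.sing_apply_ne _ _ (show (1 : ℕ) ≠ 0 by omega),
        BCLAux.sing_apply_ne _ _ (show (1 : ℕ) ≠ 0 by omega), zero_add, zero_add] at h
      exact h
    have hωU : ∀ f, ω (U f) = U' (ω f) := by
      intro f
      have h3 : ω ((1 - P) (U f)) + ω (P (U f))
          = (1 - P') (U' (ω f)) + P' (U' (ω f)) := by rw [ha, hb]
      rw [← map_add, lemD, lemD'] at h3
      exact h3
    have hωP : ∀ g, ω (P g) = P' (ω g) := by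
      intro g
      have h1 := hb (adjoint U g)
      rw [hUU, ← hωU, hUU] at h1
      exact h1
    exact ⟨ω, ωu, hωP, hωU, hωuW₁, hωuW₂⟩
  · rintro ⟨ω, ωu, hPω, hUω, hW1ω, hW2ω⟩
    have hωUadj : ∀ y, ω (adjoint U y) = adjoint U' (ω y) := by
      intro y
      have h : U' (ω (adjoint U y)) = ω y := by rw [← hUω, hUU]
      rw [← h, hU'aU']
    refine ⟨BCLAux.tau ω ωu, ?_, ?_⟩
    · intro x
      refine BCLAux.pext ?_ ?_
      · apply lp.ext; funext j
        show ω (((V₁ x).fst : ∀ _ : ℕ, F) j)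
          = ((V₁' (BCLAux.tau ω ωu x)).fst : ∀ _ : ℕ, F') j
        cases j with
        | zero =>
          rw [hV₁0, hV₁'0, BCLAux.tau_fst_apply]
          simp only [ContinuousLinearMap.sub_apply, ContinuousLinearMap.one_apply,
            map_sub, hUω, hPω]
        | succ n =>
          rw [hV₁n, hV₁'n, BCLAux.tau_fst_apply, BCLAux.tau_fst_apply]
          simp only [ContinuousLinearMap.sub_apply, ContinuousLinearMap.one_apply,
            map_add, map_sub, map_smul, hUω, hPω]
      · show ωu ((V₁ x).snd) = (V₁' (BCLAux.tau ω ωu x)).snd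
        rw [hV₁u, hV₁'u, BCLAux.tau_snd, hW1ω]
    · intro x
      refine BCLAux.pext ?_ ?_
      · apply lp.ext; funext j
        show ω (((V₂ x).fst : ∀ _ : ℕ, F) j)
          = ((V₂' (BCLAux.tau ω ωu x)).fst : ∀ _ : ℕ, F') j
        cases j with
        | zero =>
          rw [hV₂0, hV₂'0, BCLAux.tau_fst_apply]
          rw [hωUadj, hPω]
        | succ n =>
          rw [hV₂n, hV₂'n, BCLAux.tau_fst_apply, BCLAux.tau_fst_apply]
          simp only [ContinuousLinearMap.sub_apply, ContinuousLinearMap.one_apply,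
            map_add, map_sub, map_smul, hωUadj, hPω]
      · show ωu ((V₂ x).snd) = (V₂' (BCLAux.tau ω ωu x)).snd
        rw [hV₂u, hV₂'u, BCLAux.tau_snd, hW2ω]
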